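/- (Commutative central limit theorem.) Let (A, φ) be an algebraic probability space and b ∈ A a self-adjoint element with φ(b) = 0 and φ(b²) = 1. For N ≥ 1 let b(i) = 1⊗…⊗b⊗…⊗1 ∈ A^{⊗N} (b at the i-th tensor factor) and b^{(N,1)} = Σ_{i=1}^N b(i). Then b^{(N,1)}/√N converges in moments to a standard Gaussian random variable: for every integer m ≥ 1, lim_{N→∞} φ^{⊗N}( (b^{(N,1)}/√N)^m ) equals the m-th moment of N(0,1), namely 0 if m is odd and (2k)!/(2^k k!) if m = 2k is even. -/

import Mathlib

open scoped TensorProduct ComplexOrder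
open Filter Topology

noncomputable section

/-- The product state `φ^{⊗N}` on the `N`-fold algebraic tensor power `A^{⊗N}`,
determined by `φ^{⊗N}(a_1 ⊗ ⋯ ⊗ a_N) = φ(a_1) ⋯ φ(a_N)`. -/
def prodState {A : Type*} [Ring A] [Algebra ℂ A] (φ : A →ₗ[ℂ] ℂ) (N : ℕ) :
    (⨂[ℂ] _ : Fin N, A) →ₗ[ℂ] ℂ :=
  PiTensorProduct.lift ((MultilinearMap.mkPiAlgebra ℂ (Fin N) ℂ).compLinearMap fun _ => φ)

/-- `b(i) = 1 ⊗ ⋯ ⊗ b ⊗ ⋯ ⊗ 1 ∈ A^{⊗N}` with `b` at the `i`-th tensor factor. -/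
def elemAt {A : Type*} [Ring A] [Algebra ℂ A] (b : A) (N : ℕ) (i : Fin N) :
    ⨂[ℂ] _ : Fin N, A :=
  PiTensorProduct.tprod ℂ (Function.update (fun _ => (1 : A)) i b)

/-- `b^{(N,n)} = ∑_{1 ≤ i_1 < ⋯ < i_n ≤ N} b(i_1) ⋯ b(i_n)` (and `b^{(N,0)} = 1`). -/
def bPow {A : Type*} [Ring A] [Algebra ℂ A] (b : A) (N n : ℕ) : ⨂[ℂ] _ : Fin N, A :=
  ∑ s ∈ Finset.powersetCard n (Finset.univ : Finset (Fin N)),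
    ((s.sort (· ≤ ·)).map (elemAt b N)).prod

/-- `F^{(N,n)}(y)`: the sum, over all ways to choose `n` distinct tensor positions and
to place `y` at one of them and `b` at the other `n - 1` (with `1` elsewhere), of the
corresponding elementary tensors. -/
def Fsum {A : Type*} [Ring A] [Algebra ℂ A] (b y : A) (N n : ℕ) : ⨂[ℂ] _ : Fin N, A :=
  ∑ s ∈ Finset.powersetCard n (Finset.univ : Finset (Fin N)), ∑ i ∈ s,
    PiTensorProduct.tprod ℂ (fun j => if j = i then y else if j ∈ s then b else 1)

/-! ### Auxiliary material for the proof -/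

section Aux

open Finset

variable {A : Type*} [Ring A] [Algebra ℂ A]

lemma prodState_tprod (φ : A →ₗ[ℂ] ℂ) {N : ℕ} (g : Fin N → A) :
    prodState φ N (PiTensorProduct.tprod ℂ g) = ∏ i, φ (g i) := by
  simp [prodState]

lemma bPow_one (b : A) (N : ℕ) : bPow b N 1 = ∑ i, elemAt b N i := by
  rw [bPow, Finset.powersetCard_one, Finset.sum_map]
  refine Finset.sum_congr rfl fun i _ => ?_
  simp

/-- fiber cardinality of `f` over `v` -/
def fibc {m N : ℕ} (f : Fin m → Fin N) (v : Fin N) : ℕ :=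
  (Finset.univ.filter fun j => f j = v).card

lemma pow_sum_elemAt (b : A) (N m : ℕ) :
    (∑ i, elemAt b N i) ^ m
      = ∑ f : Fin m → Fin N, PiTensorProduct.tprod ℂ (fun v => b ^ fibc f v) := by
  induction m with
  | zero =>
      rw [pow_zero]
      rw [Fintype.sum_eq_single (default : Fin 0 → Fin N)
        (fun x hx => absurd (Subsingleton.elim x default) hx)]
      have h0 : ∀ v : Fin N, fibc (default : Fin 0 → Fin N) v = 0 := by
        intro v; simp [fibc]
      simp only [h0, pow_zero]
      rw [PiTensorProduct.one_def]
      rfl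
  | succ m ih =>
      rw [pow_succ', ih, Finset.mul_sum]
      rw [← Equiv.sum_comp (Fin.consEquiv (fun _ : Fin (m+1) => Fin N))
        (fun g => PiTensorProduct.tprod ℂ (fun v => b ^ fibc g v)), Fintype.sum_prod_type]
      rw [Finset.sum_comm]
      rw [Finset.sum_congr rfl fun f _ => Finset.sum_mul Finset.univ _ _]
      refine Finset.sum_congr rfl fun f _ => Finset.sum_congr rfl fun i _ => ?_
      unfold elemAt
      rw [PiTensorProduct.tprod_mul_tprod]
      congr 1
      funext v
      have hc : fibc (Fin.consEquiv (fun _ : Fin (m+1) => Fin N) (i, f)) v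
          = (if i = v then 1 else 0) + fibc f v := by
        unfold fibc
        rw [Fin.card_filter_univ_succ']
        simp [Fin.consEquiv]
      rw [hc]
      rcases eq_or_ne i v with h | h
      · subst h
        simp [Function.update, pow_add]
      · simp [Function.update, h, Ne.symm h]

/-- `f` is a "pairing function": every fiber has cardinality 0 or 2. -/
def IsPairing {m N : ℕ} (f : Fin m → Fin N) : Prop :=
  ∀ v, fibc f v = 0 ∨ fibc f v = 2

instance {m N : ℕ} (f : Fin m → Fin N) : Decidable (IsPairing f) := by
  unfold IsPairing; infer_instance

/-- The number of pairing functions `Fin m → Fin N`. -/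
def pairCount (m N : ℕ) : ℕ :=
  (Finset.univ.filter fun f : Fin m → Fin N => IsPairing f).card

lemma card_filter_univ_succAbove {n : ℕ} (p : Fin (n + 1) → Prop) [DecidablePred p]
    (j : Fin (n + 1)) :
    (univ.filter p).card
      = (if p j then 1 else 0) + (univ.filter fun y => p (j.succAbove y)).card := by
  rw [Fin.univ_succAbove n j, filter_cons, apply_ite Finset.card, card_cons, filter_map, card_map]
  have hc : (p ∘ (j.succAboveEmb : Fin n ↪ Fin (n+1))) = fun y => p (j.succAbove y) := rfl
  split_ifs <;> simp [hc, add_comm, Function.comp_def] <;> congr 1 <;> ext x <;> simp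

def extendF {m N : ℕ} (j : Fin (m + 1)) (v : Fin (N + 1)) (g : Fin m → Fin N) :
    Fin (m + 2) → Fin (N + 1) :=
  Fin.cons v (fun x' => ((finSuccEquiv' j) x').elim v (fun y => v.succAbove (g y)))

lemma extendF_zero {m N : ℕ} (j : Fin (m + 1)) (v : Fin (N + 1)) (g : Fin m → Fin N) :
    extendF j v g 0 = v := rfl

lemma extendF_succ_self {m N : ℕ} (j : Fin (m + 1)) (v : Fin (N + 1)) (g : Fin m → Fin N) :
    extendF j v g j.succ = v := by
  simp [extendF, Fin.cons_succ, finSuccEquiv'_at]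

lemma extendF_succ_succAbove {m N : ℕ} (j : Fin (m + 1)) (v : Fin (N + 1)) (g : Fin m → Fin N)
    (y : Fin m) : extendF j v g (j.succAbove y).succ = v.succAbove (g y) := by
  simp [extendF, Fin.cons_succ, finSuccEquiv'_succAbove]

lemma fibc_extendF_self {m N : ℕ} (j : Fin (m + 1)) (v : Fin (N + 1)) (g : Fin m → Fin N) :
    fibc (extendF j v g) v = 2 := by
  unfold fibc
  rw [Fin.card_filter_univ_succ']
  rw [card_filter_univ_succAbove (fun x' => extendF j v g x'.succ = v) j]
  rw [if_pos (extendF_zero j v g), if_pos (extendF_succ_self j v g)]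
  have : (univ.filter fun y : Fin m => extendF j v g ((j.succAbove y).succ) = v) = ∅ := by
    refine Finset.filter_eq_empty_iff.2 fun y _ => ?_
    rw [extendF_succ_succAbove]
    exact Fin.succAbove_ne v (g y)
  rw [this]
  rfl

lemma fibc_extendF_succAbove {m N : ℕ} (j : Fin (m + 1)) (v : Fin (N + 1)) (g : Fin m → Fin N)
    (z : Fin N) : fibc (extendF j v g) (v.succAbove z) = fibc g z := by
  unfold fibc
  rw [Fin.card_filter_univ_succ']
  rw [card_filter_univ_succAbove (fun x' => extendF j v g x'.succ = v.succAbove z) j]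
  rw [extendF_zero, if_neg (Fin.succAbove_ne v z).symm]
  rw [extendF_succ_self, if_neg (Fin.succAbove_ne v z).symm]
  have : (univ.filter fun y : Fin m => extendF j v g ((j.succAbove y).succ) = v.succAbove z)
      = univ.filter fun y => g y = z := by
    refine Finset.filter_congr fun y _ => ?_
    rw [extendF_succ_succAbove]
    exact ⟨fun h => Fin.succAbove_right_injective h, fun h => by rw [h]⟩
  rw [this, zero_add, zero_add]

lemma isPairing_extendF {m N : ℕ} {j : Fin (m + 1)} {v : Fin (N + 1)} {g : Fin m → Fin N}
    (hg : IsPairing g) : IsPairing (extendF j v g) := by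
  intro w
  rcases eq_or_ne w v with h | h
  · rw [h]; exact Or.inr (fibc_extendF_self j v g)
  · obtain ⟨z, rfl⟩ := Fin.exists_succAbove_eq h
    rw [fibc_extendF_succAbove]
    exact hg z

lemma pairCount_succ_succ (m N : ℕ) :
    pairCount (m + 2) (N + 1) = (m + 1) * ((N + 1) * pairCount m N) := by
  have hT : ((univ : Finset (Fin (m+1))) ×ˢ ((univ : Finset (Fin (N+1))) ×ˢ
      (univ.filter fun g : Fin m → Fin N => IsPairing g))).card
      = (m + 1) * ((N + 1) * pairCount m N) := by
    rw [Finset.card_product, Finset.card_product, card_univ, card_univ,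
      Fintype.card_fin, Fintype.card_fin, pairCount]
  rw [← hT, pairCount]
  refine (Finset.card_bij (fun p _ => extendF p.1 p.2.1 p.2.2) ?_ ?_ ?_).symm
  · rintro ⟨j, v, g⟩ hp
    simp only [Finset.mem_product, Finset.mem_filter] at hp
    exact Finset.mem_filter.2 ⟨Finset.mem_univ _, isPairing_extendF hp.2.2.2⟩
  · rintro ⟨j, v, g⟩ hp ⟨j', v', g'⟩ hp' hE0
    have hE : extendF j v g = extendF j' v' g' := hE0
    have hv : v = v' := by
      have := congrFun hE 0
      rwa [extendF_zero, extendF_zero] at this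
    subst hv
    have hj : j = j' := by
      by_contra h
      obtain ⟨y, hy⟩ := Fin.exists_succAbove_eq (Ne.symm h)
      have := congrFun hE j'.succ
      rw [extendF_succ_self, ← hy, extendF_succ_succAbove] at this
      exact Fin.succAbove_ne v (g y) this
    subst hj
    have hg : g = g' := by
      funext y
      have := congrFun hE (j.succAbove y).succ
      rw [extendF_succ_succAbove, extendF_succ_succAbove] at this
      exact Fin.succAbove_right_injective this
    rw [hg]
  · intro f hf
    have hf' : IsPairing f := (Finset.mem_filter.1 hf).2
    set v := f 0 with hv
    have hv2 : fibc f v = 2 := by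
      rcases hf' v with h | h
      · exfalso
        have : (0 : Fin (m+2)) ∈ univ.filter fun j => f j = v := by
          simp [hv]
        rw [fibc] at h
        simp [Finset.card_eq_zero.1 h] at this
      · exact h
    have hcard1 : (univ.filter fun x' : Fin (m+1) => f x'.succ = v).card = 1 := by
      have := hv2
      rw [fibc, Fin.card_filter_univ_succ', if_pos rfl] at this
      omega
    obtain ⟨j, hj⟩ := Finset.card_eq_one.1 hcard1
    have hjv : f j.succ = v := by
      have : j ∈ univ.filter fun x' : Fin (m+1) => f x'.succ = v := by rw [hj]; simp
      exact (Finset.mem_filter.1 this).2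
    have huniq : ∀ x' : Fin (m+1), f x'.succ = v → x' = j := by
      intro x' hx'
      have : x' ∈ univ.filter fun x' : Fin (m+1) => f x'.succ = v := by simp [hx']
      rw [hj] at this
      exact Finset.mem_singleton.1 this
    have hne : ∀ y : Fin m, f ((j.succAbove y).succ) ≠ v := by
      intro y hy
      exact Fin.succAbove_ne j y (huniq _ hy)
    choose g hg using fun y : Fin m => Fin.exists_succAbove_eq (hne y)
    have hfe : f = extendF j v g := by
      funext x
      induction x using Fin.cases with
      | zero => exact hv.symm
      | succ x' =>
        rcases eq_or_ne x' j with rfl | h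
        · rw [extendF_succ_self]; exact hjv
        · obtain ⟨y, rfl⟩ := Fin.exists_succAbove_eq h
          rw [extendF_succ_succAbove, hg y]
    have hgp : IsPairing g := by
      intro z
      have := hf' (v.succAbove z)
      rwa [hfe, fibc_extendF_succAbove] at this
    refine ⟨⟨j, v, g⟩, ?_, hfe.symm⟩
    simp only [Finset.mem_product, Finset.mem_filter]
    exact ⟨Finset.mem_univ _, Finset.mem_univ _, Finset.mem_univ _, hgp⟩

lemma pairCount_zero (N : ℕ) : pairCount 0 N = 1 := by
  rw [pairCount, Finset.filter_true_of_mem, card_univ, Fintype.card_fun]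
  · simp
  · intro f _ v
    left
    simp [fibc]

lemma pairCount_zero_right (m : ℕ) (hm : m ≠ 0) : pairCount m 0 = 0 := by
  have : pairCount m 0 ≤ (univ : Finset (Fin m → Fin 0)).card := Finset.card_filter_le _ _
  rw [card_univ, Fintype.card_fun, Fintype.card_fin, Fintype.card_fin, zero_pow hm] at this
  omega

lemma sum_fibc {m N : ℕ} (f : Fin m → Fin N) : ∑ v, fibc f v = m := by
  have := Finset.card_eq_sum_card_fiberwise (f := f) (s := univ) (t := univ)
    (fun x _ => mem_univ _)
  simpa [fibc, card_univ] using this.symm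

lemma isPairing_even {m N : ℕ} {f : Fin m → Fin N} (h : IsPairing f) : Even m := by
  rw [← sum_fibc f]
  refine Finset.even_sum _ fun v _ => ?_
  rcases h v with h' | h' <;> simp [h']

lemma pairCount_of_odd {m : ℕ} (N : ℕ) (h : ¬ Even m) : pairCount m N = 0 := by
  rw [pairCount, Finset.card_eq_zero, Finset.filter_eq_empty_iff]
  exact fun f _ hf => h (isPairing_even hf)

lemma pairCount_closed : ∀ k N : ℕ, pairCount (2 * k) N * (2 ^ k * k.factorial)
    = (2 * k).factorial * N.descFactorial k := by
  intro k
  induction k with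
  | zero => intro N; simp [pairCount_zero]
  | succ k ih =>
    intro N
    cases N with
    | zero =>
      rw [pairCount_zero_right _ (by omega), Nat.descFactorial_succ]
      simp
    | succ N =>
      have h2 : 2 * (k + 1) = 2 * k + 2 := by ring
      rw [h2, pairCount_succ_succ, Nat.succ_descFactorial_succ]
      have hfac : (2 * k + 2).factorial = (2 * k + 2) * ((2 * k + 1) * (2 * k).factorial) := by
        rw [show 2*k+2 = (2*k+1)+1 from rfl, Nat.factorial_succ, Nat.factorial_succ]
      rw [hfac, pow_succ, Nat.factorial_succ]
      have hre : (2*k+1) * ((N+1) * pairCount (2*k) N) * (2^k * 2 * ((k+1) * k.factorial))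
          = (2*k+1) * (N+1) * (2*(k+1)) * (pairCount (2*k) N * (2^k * k.factorial)) := by ring
      rw [hre, ih N]
      ring

end Aux


section Aux2

open Finset

variable {A : Type*} [Ring A] [Algebra ℂ A]

/-- The "bad" functions: not pairings, but with no fiber of cardinality one. -/
def badSet (m N : ℕ) : Finset (Fin m → Fin N) :=
  Finset.univ.filter fun f => ¬ IsPairing f ∧ ∀ v, fibc f v ≠ 1

def errSum (φ : A →ₗ[ℂ] ℂ) (b : A) (m N : ℕ) : ℂ :=
  ∑ f ∈ badSet m N, ∏ v, φ (b ^ fibc f v)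

lemma key_formula (φ : A →ₗ[ℂ] ℂ) (hφ_unital : φ 1 = 1)
    (b : A) (hb1 : φ b = 0) (hb2 : φ (b * b) = 1) (m N : ℕ) :
    prodState φ N ((∑ i, elemAt b N i) ^ m)
      = (pairCount m N : ℂ) + errSum φ b m N := by
  rw [pow_sum_elemAt, map_sum]
  rw [Finset.sum_congr rfl fun f _ => prodState_tprod φ _]
  rw [← Finset.sum_filter_add_sum_filter_not Finset.univ (fun f => IsPairing f)
    (fun f => ∏ v, φ (b ^ fibc f v))]
  congr 1
  · rw [Finset.sum_congr rfl (fun f hf => ?_), Finset.sum_const, nsmul_eq_mul, mul_one, pairCount]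
    refine Finset.prod_eq_one fun v _ => ?_
    rcases (Finset.mem_filter.1 hf).2 v with h' | h'
    · rw [h', pow_zero, hφ_unital]
    · rw [h', pow_two, hb2]
  · rw [← Finset.sum_filter_add_sum_filter_not
      (Finset.univ.filter fun f : Fin m → Fin N => ¬ IsPairing f)
      (fun f => ∀ v, fibc f v ≠ 1) (fun f => ∏ v, φ (b ^ fibc f v))]
    rw [Finset.filter_filter]
    have hzero : ∑ f ∈ (Finset.univ.filter fun f : Fin m → Fin N => ¬ IsPairing f).filter
        (fun f => ¬ ∀ v, fibc f v ≠ 1), ∏ v, φ (b ^ fibc f v) = 0 := by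
      refine Finset.sum_eq_zero fun f hf => ?_
      obtain ⟨v, hv⟩ := by
        have := (Finset.mem_filter.1 hf).2
        push_neg at this
        exact this
      refine Finset.prod_eq_zero (Finset.mem_univ v) ?_
      rw [hv, pow_one, hb1]
    rw [hzero, add_zero, errSum, badSet]

lemma fibc_le {m N : ℕ} (f : Fin m → Fin N) (v : Fin N) : fibc f v ≤ m := by
  have := Finset.card_filter_le (Finset.univ : Finset (Fin m)) (fun j => f j = v)
  simpa [fibc] using this

lemma W_bound (φ : A →ₗ[ℂ] ℂ) (hφ_unital : φ 1 = 1) (b : A) (m : ℕ) {N : ℕ}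
    (f : Fin m → Fin N) :
    ‖∏ v, φ (b ^ fibc f v)‖ ≤ (1 + ∑ k ∈ Finset.range (m+1), ‖φ (b ^ k)‖) ^ m := by
  set M := 1 + ∑ k ∈ Finset.range (m+1), ‖φ (b ^ k)‖ with hM
  have hM1 : 1 ≤ M :=
    le_add_of_nonneg_right (Finset.sum_nonneg fun _ _ => norm_nonneg _)
  have hMk : ∀ k, k ≤ m → ‖φ (b ^ k)‖ ≤ M := by
    intro k hk
    have : ‖φ (b ^ k)‖ ≤ ∑ k ∈ Finset.range (m+1), ‖φ (b ^ k)‖ :=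
      Finset.single_le_sum (f := fun k => ‖φ (b ^ k)‖) (fun _ _ => norm_nonneg _)
        (Finset.mem_range.2 (Nat.lt_succ_of_le hk))
    linarith
  rw [norm_prod]
  rw [← Finset.prod_filter_mul_prod_filter_not Finset.univ (fun v => fibc f v ≠ 0)
    (fun v => ‖φ (b ^ fibc f v)‖)]
  have h2 : ∏ v ∈ Finset.univ.filter (fun v => ¬ fibc f v ≠ 0), ‖φ (b ^ fibc f v)‖ = 1 := by
    refine Finset.prod_eq_one fun v hv => ?_
    have : fibc f v = 0 := by simpa using (Finset.mem_filter.1 hv).2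
    rw [this, pow_zero, hφ_unital, norm_one]
  rw [h2, mul_one]
  calc ∏ v ∈ Finset.univ.filter (fun v => fibc f v ≠ 0), ‖φ (b ^ fibc f v)‖
      ≤ M ^ (Finset.univ.filter (fun v => fibc f v ≠ 0)).card := by
        rw [← Finset.prod_const]
        exact Finset.prod_le_prod (fun v _ => norm_nonneg _) (fun v _ => hMk _ (fibc_le f v))
    _ ≤ M ^ m := by
        refine pow_le_pow_right₀ hM1 ?_
        calc (Finset.univ.filter (fun v => fibc f v ≠ 0)).card
            = ∑ v ∈ Finset.univ.filter (fun v => fibc f v ≠ 0), 1 := by simp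
          _ ≤ ∑ v ∈ Finset.univ.filter (fun v => fibc f v ≠ 0), fibc f v :=
              Finset.sum_le_sum fun v hv =>
                Nat.one_le_iff_ne_zero.2 (Finset.mem_filter.1 hv).2
          _ ≤ ∑ v, fibc f v := Finset.sum_le_sum_of_subset (Finset.filter_subset _ _)
          _ = m := sum_fibc f

lemma badSet_card (m N : ℕ) (hmN : m ≤ N) :
    (badSet m N).card ≤ m ^ m * N ^ ((m-1)/2) := by
  set r := (m-1)/2 with hr
  have hsupp : ∀ f : Fin m → Fin N, (¬ IsPairing f ∧ ∀ v, fibc f v ≠ 1) →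
      (Finset.univ.filter fun v => fibc f v ≠ 0).card ≤ r := by
    intro f ⟨hnp, h1⟩
    set supp := Finset.univ.filter fun v => fibc f v ≠ 0 with hsuppdef
    have hsum : ∑ v ∈ supp, fibc f v = m := by
      rw [hsuppdef, Finset.sum_filter_of_ne (fun v _ h => h), sum_fibc]
    have h2 : ∀ v ∈ supp, 2 ≤ fibc f v := by
      intro v hv
      have h0 : fibc f v ≠ 0 := (Finset.mem_filter.1 hv).2
      have := h1 v
      omega
    obtain ⟨v₀, hv₀, hv₀3⟩ : ∃ v₀ ∈ supp, 3 ≤ fibc f v₀ := by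
      by_contra hcon
      push_neg at hcon
      refine hnp fun v => ?_
      by_cases h0 : fibc f v = 0
      · exact Or.inl h0
      · have hvs : v ∈ supp := Finset.mem_filter.2 ⟨Finset.mem_univ _, h0⟩
        have := h2 v hvs
        have := hcon v hvs
        omega
    have hbig : 3 + 2 * (supp.card - 1) ≤ m := by
      have hsplit : fibc f v₀ + ∑ v ∈ supp.erase v₀, fibc f v = m := by
        rw [Finset.add_sum_erase _ _ hv₀]; exact hsum
      have h2' : 2 * (supp.erase v₀).card ≤ ∑ v ∈ supp.erase v₀, fibc f v := by
        have := Finset.card_nsmul_le_sum (supp.erase v₀) (fibc f) 2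
          (fun v hv => h2 v (Finset.mem_of_mem_erase hv))
        simpa [mul_comm] using this
      have hce : (supp.erase v₀).card = supp.card - 1 := Finset.card_erase_of_mem hv₀
      omega
    have hpos : 1 ≤ supp.card := Finset.card_pos.2 ⟨v₀, hv₀⟩
    omega
  have hrN : r ≤ N := by omega
  have hsub : badSet m N
      ⊆ (Finset.powersetCard r (Finset.univ : Finset (Fin N))).biUnion
          (fun T => Fintype.piFinset fun _ : Fin m => T) := by
    intro f hf
    have hf' := (Finset.mem_filter.1 hf).2
    obtain ⟨T, hsubT, hcardT⟩ := Finset.exists_superset_card_eq (hsupp f hf')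
      (by rw [Fintype.card_fin]; exact hrN)
    refine Finset.mem_biUnion.2 ⟨T, ?_, ?_⟩
    · rw [Finset.mem_powersetCard_univ]; exact hcardT
    · refine Fintype.mem_piFinset.2 fun j => ?_
      refine hsubT (Finset.mem_filter.2 ⟨Finset.mem_univ _, ?_⟩)
      have : j ∈ Finset.univ.filter fun j' => f j' = f j := by simp
      intro h0
      rw [fibc] at h0
      simp [Finset.card_eq_zero.1 h0] at this
  calc (badSet m N).card
      ≤ ((Finset.powersetCard r (Finset.univ : Finset (Fin N))).biUnion
          (fun T => Fintype.piFinset fun _ : Fin m => T)).card := Finset.card_le_card hsub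
    _ ≤ ∑ T ∈ Finset.powersetCard r (Finset.univ : Finset (Fin N)),
          (Fintype.piFinset fun _ : Fin m => T).card := Finset.card_biUnion_le
    _ ≤ ∑ T ∈ Finset.powersetCard r (Finset.univ : Finset (Fin N)), m ^ m := by
        refine Finset.sum_le_sum fun T hT => ?_
        rw [Fintype.card_piFinset]
        have hTc : T.card = r := (Finset.mem_powersetCard_univ.1 hT)
        calc ∏ _j : Fin m, T.card = r ^ m := by rw [Finset.prod_const, hTc]; simp
          _ ≤ m ^ m := Nat.pow_le_pow_left (by omega) m
    _ = ((Finset.univ : Finset (Fin N)).powersetCard r).card * m ^ m := by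
        rw [Finset.sum_const, smul_eq_mul]
    _ ≤ N ^ r * m ^ m := by
        refine Nat.mul_le_mul_right _ ?_
        rw [Finset.card_powersetCard, Finset.card_univ, Fintype.card_fin]
        exact Nat.choose_le_pow _ _
    _ = m ^ m * N ^ r := Nat.mul_comm _ _

lemma err_tendsto (m r : ℕ) (hr : 2 * r + 1 ≤ m) (M : ℝ) (hM1 : 1 ≤ M)
    (E : ℕ → ℂ) (hE : ∀ N, m ≤ N → ‖E N‖ ≤ ((m ^ m * N ^ r : ℕ) : ℝ) * M ^ m) :
    Tendsto (fun N : ℕ => ((((Real.sqrt N : ℝ) : ℂ))⁻¹) ^ m * E N) atTop (𝓝 0) := by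
  have hC : (0:ℝ) ≤ (m:ℝ) ^ m * M ^ m :=
    mul_nonneg (pow_nonneg (Nat.cast_nonneg m) m) (pow_nonneg (by linarith) m)
  refine squeeze_zero_norm' (a := fun N : ℕ => ((m:ℝ) ^ m * M ^ m) * (N:ℝ) ^ (-(1/2) : ℝ)) ?_ ?_
  · filter_upwards [eventually_ge_atTop m, eventually_ge_atTop 1] with N hNm hN1
    have hx1 : (1:ℝ) ≤ (N:ℝ) := by exact_mod_cast hN1
    have hx0 : (0:ℝ) < (N:ℝ) := by linarith
    have hnorm : ‖((((Real.sqrt N : ℝ) : ℂ))⁻¹) ^ m * E N‖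
        = ((Real.sqrt N)⁻¹) ^ m * ‖E N‖ := by
      rw [norm_mul, norm_pow, norm_inv, Complex.norm_real,
        Real.norm_eq_abs, abs_of_nonneg (Real.sqrt_nonneg _)]
    rw [hnorm]
    have hs : (0:ℝ) ≤ ((Real.sqrt N)⁻¹) ^ m :=
      pow_nonneg (inv_nonneg.2 (Real.sqrt_nonneg _)) m
    have hkey : ((Real.sqrt N)⁻¹) ^ m * (N:ℝ) ^ r ≤ (N:ℝ) ^ (-(1/2) : ℝ) := by
      have h1 : ((Real.sqrt N)⁻¹) ^ m * (N:ℝ) ^ r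
          = (N:ℝ) ^ ((-(1/2):ℝ) * m + r) := by
        rw [Real.sqrt_eq_rpow, ← Real.rpow_neg hx0.le,
          ← Real.rpow_natCast ((N:ℝ) ^ (-(1/2):ℝ)) m, ← Real.rpow_mul hx0.le,
          ← Real.rpow_natCast (N:ℝ) r, ← Real.rpow_add hx0]
      rw [h1]
      refine Real.rpow_le_rpow_of_exponent_le hx1 ?_
      have : (2 * r + 1 : ℝ) ≤ (m:ℝ) := by exact_mod_cast hr
      linarith
    calc ((Real.sqrt N)⁻¹) ^ m * ‖E N‖
        ≤ ((Real.sqrt N)⁻¹) ^ m * (((m ^ m * N ^ r : ℕ) : ℝ) * M ^ m) :=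
          mul_le_mul_of_nonneg_left (hE N hNm) hs
      _ = ((m:ℝ) ^ m * M ^ m) * (((Real.sqrt N)⁻¹) ^ m * (N:ℝ) ^ r) := by
          push_cast
          ring
      _ ≤ ((m:ℝ) ^ m * M ^ m) * ((N:ℝ) ^ (-(1/2) : ℝ)) :=
          mul_le_mul_of_nonneg_left hkey hC
  · have h0 : Tendsto (fun x : ℝ => x ^ (-(1/2) : ℝ)) atTop (𝓝 0) :=
      tendsto_rpow_neg_atTop (by norm_num)
    have := (h0.comp tendsto_natCast_atTop_atTop).const_mul ((m:ℝ) ^ m * M ^ m)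
    simpa using this

lemma descFactorial_div_tendsto (k : ℕ) :
    Tendsto (fun N : ℕ => ((N.descFactorial k : ℂ)) / (N:ℂ) ^ k) atTop (𝓝 1) := by
  have hfac : ∀ i : ℕ, Tendsto (fun N : ℕ => ((N:ℂ) - i) / N) atTop (𝓝 1) := by
    intro i
    have hz : Tendsto (fun N : ℕ => (i:ℂ) / N) atTop (𝓝 0) := by
      refine squeeze_zero_norm (fun N => ?_) (tendsto_const_div_atTop_nhds_zero_nat (i : ℝ))
      rw [norm_div]
      simp
    have := (tendsto_const_nhds (x := (1:ℂ)) (f := atTop)).sub hz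
    rw [sub_zero] at this
    refine this.congr' ?_
    filter_upwards [eventually_ge_atTop 1] with N hN1
    have hN0 : (N:ℂ) ≠ 0 := Nat.cast_ne_zero.2 (by omega)
    field_simp
  have hprod : Tendsto (fun N : ℕ => ∏ i ∈ Finset.range k, (((N:ℂ) - i) / N)) atTop
      (𝓝 (∏ _i ∈ Finset.range k, (1:ℂ))) :=
    tendsto_finset_prod _ (fun i _ => hfac i)
  rw [Finset.prod_const_one] at hprod
  refine hprod.congr' ?_
  filter_upwards [eventually_ge_atTop k] with N hNk
  rw [Nat.descFactorial_eq_prod_range, Nat.cast_prod, Finset.prod_div_distrib,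
    Finset.prod_const, Finset.card_range]
  congr 1
  refine Finset.prod_congr rfl fun i hi => ?_
  have : i ≤ N := le_trans (Nat.le_of_lt_succ (Nat.lt_succ_of_lt (Finset.mem_range.1 hi))) hNk
  push_cast [Nat.cast_sub this]
  ring

end Aux2

/-- **Commutative central limit theorem** (Theorem 3.2). For a self-adjoint element `b`
of an algebraic probability space `(A, φ)` with `φ(b) = 0` and `φ(b²) = 1`, the sums
`b^{(N,1)}/√N` converge in moments (w.r.t. the product states `φ^{⊗N}`) to a standard
Gaussian: the `m`-th moments converge to `0` for `m` odd and to `(2k)!/(2^k k!)` for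
`m = 2k` even. -/
theorem commutative_central_limit_theorem
    {A : Type*} [Ring A] [Algebra ℂ A] [StarRing A] [StarModule ℂ A]
    (φ : A →ₗ[ℂ] ℂ) (hφ_unital : φ 1 = 1) (hφ_pos : ∀ a, 0 ≤ φ (star a * a))
    (b : A) (hb : star b = b) (hb1 : φ b = 0) (hb2 : φ (b * b) = 1)
    (m : ℕ) (hm : 1 ≤ m) :
    Tendsto
      (fun N : ℕ =>
        prodState φ N ((((Real.sqrt N : ℝ) : ℂ)⁻¹ • bPow b N 1) ^ m))
      atTop
      (𝓝 (if Even m then (m.factorial : ℂ) / (2 ^ (m / 2) * (m / 2).factorial)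
          else 0)) := by
  set M : ℝ := 1 + ∑ k ∈ Finset.range (m+1), ‖φ (b ^ k)‖ with hMdef
  have hM1 : (1:ℝ) ≤ M :=
    le_add_of_nonneg_right (Finset.sum_nonneg fun _ _ => norm_nonneg _)
  have hEb : ∀ N, m ≤ N →
      ‖errSum φ b m N‖ ≤ ((m ^ m * N ^ ((m-1)/2) : ℕ) : ℝ) * M ^ m := by
    intro N hN
    calc ‖errSum φ b m N‖
        ≤ ∑ f ∈ badSet m N, ‖∏ v, φ (b ^ fibc f v)‖ := norm_sum_le _ _
      _ ≤ ∑ _f ∈ badSet m N, M ^ m :=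
          Finset.sum_le_sum fun f _ => W_bound φ hφ_unital b m f
      _ = ((badSet m N).card : ℝ) * M ^ m := by rw [Finset.sum_const, nsmul_eq_mul]
      _ ≤ _ := by
          refine mul_le_mul_of_nonneg_right ?_ (pow_nonneg (by linarith) m)
          exact_mod_cast badSet_card m N hN
  have herr : Tendsto (fun N : ℕ => ((((Real.sqrt N : ℝ) : ℂ))⁻¹) ^ m * errSum φ b m N)
      atTop (𝓝 0) :=
    err_tendsto m ((m-1)/2) (by omega) M hM1 _ hEb
  have hmain : Tendsto
      (fun N : ℕ => ((((Real.sqrt N : ℝ) : ℂ))⁻¹) ^ m * (pairCount m N : ℂ)) atTop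
      (𝓝 (if Even m then (m.factorial : ℂ) / (2 ^ (m / 2) * (m / 2).factorial) else 0)) := by
    by_cases hev : Even m
    · rw [if_pos hev]
      set k := m / 2 with hk
      have hm2k : m = 2 * k := by
        have := Nat.even_iff.1 hev
        omega
      have hL := descFactorial_div_tendsto k
      have hT := (tendsto_const_nhds
        (x := (m.factorial : ℂ) / (2 ^ k * (k.factorial : ℂ))) (f := atTop)).mul hL
      rw [mul_one] at hT
      refine Tendsto.congr' ?_ hT
      filter_upwards [eventually_ge_atTop 1] with N hN1
      have hNC : (N:ℂ) ≠ 0 := Nat.cast_ne_zero.2 (by omega)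
      have hsq : (((Real.sqrt N : ℝ) : ℂ)) ^ 2 = (N:ℂ) := by
        rw [← Complex.ofReal_pow, Real.sq_sqrt (Nat.cast_nonneg N)]
        norm_cast
      have hcm : ((((Real.sqrt N : ℝ) : ℂ))⁻¹) ^ m = ((N:ℂ) ^ k)⁻¹ := by
        conv_lhs => rw [hm2k]
        rw [pow_mul, inv_pow, hsq, inv_pow]
      have h2k0 : (2:ℂ) ^ k * (k.factorial : ℂ) ≠ 0 := by
        refine mul_ne_zero (pow_ne_zero _ two_ne_zero) ?_
        exact_mod_cast k.factorial_ne_zero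
      have hpc : (pairCount m N : ℂ) * ((2:ℂ) ^ k * (k.factorial : ℂ))
          = (m.factorial : ℂ) * (N.descFactorial k : ℂ) := by
        have h := pairCount_closed k N
        rw [← hm2k] at h
        exact_mod_cast h
      have hpc' : (pairCount m N : ℂ)
          = (m.factorial : ℂ) * (N.descFactorial k : ℂ) / ((2:ℂ) ^ k * (k.factorial : ℂ)) := by
        rw [eq_div_iff h2k0]
        exact hpc
      rw [hcm, hpc']
      have hNk : (N:ℂ) ^ k ≠ 0 := pow_ne_zero _ hNC
      field_simp
      try exact Or.inl trivial
    · rw [if_neg hev]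
      have hz : (fun N : ℕ => ((((Real.sqrt N : ℝ) : ℂ))⁻¹) ^ m * (pairCount m N : ℂ))
          = fun _ => (0:ℂ) := by
        funext N
        rw [pairCount_of_odd N hev]
        simp
      rw [hz]
      exact tendsto_const_nhds
  have hsum := hmain.add herr
  rw [add_zero] at hsum
  refine hsum.congr fun N => ?_
  rw [← mul_add, ← key_formula φ hφ_unital b hb1 hb2 m N, ← bPow_one]
  rw [smul_pow, map_smul, smul_eq_mul]
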